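/- Let p : (0, ∞) → [0, ∞) be a bounded probability density satisfying p(s) ≤ C_ρ s^{−1−ρ} for s ≥ 1, where ρ ∈ (0, 1). Let H, ζ, d, ε > 0 with (H+ζ)(d−ε) < 1, let 0 < r, t with r^{1/(H+ζ)} ≤ t^{1/ρ}, and suppose 0 ≤ F(s) ≤ C_2 min{1, (r / (t^{1/ρ} s)^{H+ζ})^{d−ε}} for all s > 0. Then ∫_0^∞ F(s) p(s) ds ≤ C ( r^{1/(H+ζ)} / t^{1/ρ} + (r / t^{(H+ζ)/ρ})^{d−ε} ), where C depends only on the stated constants and on ∫_0^∞ s^{−(H+ζ)(d−ε)} p(s) ds < ∞. -/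
import Mathlib


open MeasureTheory Metric Set ENNReal

noncomputable section

/-- For a bounded probability density `p` on `(0,∞)` with decay
`p(s) ≤ C_ρ s^{-1-ρ}` for `s ≥ 1`, if `(H+ζ)(d-ε) < 1`, `r^{1/(H+ζ)} ≤ t^{1/ρ}`, and
`0 ≤ F(s) ≤ C₂ min{1, (r/(t^{1/ρ} s)^{H+ζ})^{d-ε}}`, then
`∫_0^∞ F(s) p(s) ds ≤ C (r^{1/(H+ζ)}/t^{1/ρ} + (r/t^{(H+ζ)/ρ})^{d-ε})`, where `C`
depends only on the stated constants and on `∫_0^∞ s^{-(H+ζ)(d-ε)} p(s) ds < ∞`. -/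
theorem stmt17 (ρ H ζ ε C₂ Cρ M : ℝ) (d : ℕ)
    (hρ : 0 < ρ) (hρ1 : ρ < 1) (hH : 0 < H) (hζ : 0 < ζ) (hε : 0 < ε) (hεd : ε < d)
    (hcrit : (H + ζ) * ((d : ℝ) - ε) < 1) (hC₂ : 0 < C₂) (hCρ : 0 < Cρ) (hM : 0 < M)
    (p : ℝ → ℝ) (hp_meas : Measurable p) (hp_nonneg : ∀ s, 0 ≤ p s)
    (hp_bdd : ∀ s, p s ≤ M)
    (hp_prob : (∫ s in Set.Ioi (0 : ℝ), p s) = 1)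
    (hp_int : IntegrableOn p (Set.Ioi 0))
    (hp_decay : ∀ s : ℝ, 1 ≤ s → p s ≤ Cρ * s ^ (-(1 : ℝ) - ρ))
    (hmoment : IntegrableOn
      (fun s => s ^ (-((H + ζ) * ((d : ℝ) - ε))) * p s) (Set.Ioi 0)) :
    ∃ C > 0, ∀ (r t : ℝ) (F : ℝ → ℝ), 0 < r → 0 < t →
      r ^ (1 / (H + ζ)) ≤ t ^ (1 / ρ) → Measurable F →
      (∀ s : ℝ, 0 < s → 0 ≤ F s ∧
        F s ≤ C₂ * min 1 ((r / (t ^ (1 / ρ) * s) ^ (H + ζ)) ^ ((d : ℝ) - ε))) →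
      (∫ s in Set.Ioi (0 : ℝ), F s * p s) ≤
        C * (r ^ (1 / (H + ζ)) / t ^ (1 / ρ)
          + (r / t ^ ((H + ζ) / ρ)) ^ ((d : ℝ) - ε)) := by
  have hdε : (0:ℝ) < (d:ℝ) - ε := by linarith
  set β : ℝ := (H + ζ) * ((d : ℝ) - ε) with hβdef
  have hβpos : 0 < β := by positivity
  set K : ℝ := ∫ s in Set.Ioi (0:ℝ), s ^ (-β) * p s with hKdef
  have hK0 : 0 ≤ K := by
    apply setIntegral_nonneg measurableSet_Ioi
    intro s hs
    have hs' : (0:ℝ) < s := hs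
    exact mul_nonneg (Real.rpow_nonneg hs'.le _) (hp_nonneg s)
  refine ⟨C₂ * K + 1, by positivity, ?_⟩
  intro r t F hr ht hrt hFmeas hF
  set A : ℝ := (r / t ^ ((H + ζ) / ρ)) ^ ((d : ℝ) - ε) with hAdef
  have htρ : (0:ℝ) < t ^ (1 / ρ) := Real.rpow_pos_of_pos ht _
  have htHζ : (0:ℝ) < t ^ ((H + ζ) / ρ) := Real.rpow_pos_of_pos ht _
  have hApos : 0 < A := by positivity
  have hx : (0:ℝ) ≤ r ^ (1 / (H + ζ)) / t ^ (1 / ρ) := by positivity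
  -- key pointwise identity
  have hid : ∀ s : ℝ, 0 < s →
      (r / (t ^ (1 / ρ) * s) ^ (H + ζ)) ^ ((d : ℝ) - ε) = A * s ^ (-β) := by
    intro s hs
    have e1 : (t ^ (1 / ρ) * s) ^ (H + ζ) = t ^ ((H + ζ) / ρ) * s ^ (H + ζ) := by
      rw [Real.mul_rpow htρ.le hs.le, ← Real.rpow_mul ht.le,
        show 1 / ρ * (H + ζ) = (H + ζ) / ρ by ring]
    have hsHζ : (0:ℝ) < s ^ (H + ζ) := Real.rpow_pos_of_pos hs _
    rw [e1]
    have e2 : r / (t ^ ((H + ζ) / ρ) * s ^ (H + ζ))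
        = (r / t ^ ((H + ζ) / ρ)) * s ^ (-(H + ζ)) := by
      rw [Real.rpow_neg hs.le]
      field_simp
    rw [e2, Real.mul_rpow (by positivity) (by positivity),
      ← Real.rpow_mul hs.le]
    rw [hAdef, hβdef]
    ring_nf
  have key : (∫ s in Set.Ioi (0:ℝ), F s * p s)
      ≤ ∫ s in Set.Ioi (0:ℝ), (C₂ * A) * (s ^ (-β) * p s) := by
    apply integral_mono_of_nonneg
    · filter_upwards [ae_restrict_mem measurableSet_Ioi] with s hs
      exact mul_nonneg (hF s hs).1 (hp_nonneg s)
    · exact (hmoment.const_mul (C₂ * A))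
    · filter_upwards [ae_restrict_mem measurableSet_Ioi] with s hs
      have hs' : (0:ℝ) < s := hs
      have h1 : F s ≤ C₂ * (A * s ^ (-β)) := by
        refine le_trans (hF s hs').2 ?_
        have h2 := (min_le_right (1:ℝ)
          ((r / (t ^ (1 / ρ) * s) ^ (H + ζ)) ^ ((d : ℝ) - ε))).trans
          (le_of_eq (hid s hs'))
        exact mul_le_mul_of_nonneg_left h2 hC₂.le
      calc F s * p s ≤ (C₂ * (A * s ^ (-β))) * p s :=
            mul_le_mul_of_nonneg_right h1 (hp_nonneg s)
        _ = (C₂ * A) * (s ^ (-β) * p s) := by ring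
  rw [show (∫ s in Set.Ioi (0:ℝ), (C₂ * A) * (s ^ (-β) * p s)) = (C₂ * A) * K from
    integral_const_mul _ _] at key
  refine key.trans ?_
  nlinarith [mul_nonneg hK0 hApos.le, mul_nonneg (mul_nonneg hC₂.le hK0) hx,
    mul_nonneg hC₂.le (mul_nonneg hK0 hApos.le)]
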